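/- For the explicit discretization z^{k+1} = z^k + ε(J∇H(z^k) + z⋆ − z^k) with step size ε = 1/(L² + 1), the averaged iterate z̄^T = (1/T)∑_{k=0}^{T−1} z^k satisfies H(z̄^T) ≤ (1/(εT))·(H(z^0) + (1/(2L))‖z^0 − z⋆‖²); in particular H(z̄^T) = O(1/T). -/

import Mathlib

open RealInnerProductSpace Finset

/-- The standard symplectic matrix `J` on `ℝ^{2n}`: `J (x, p) = (p, -x)`. -/
def Jmap (n : ℕ) (v : EuclideanSpace ℝ (Fin n ⊕ Fin n)) :
    EuclideanSpace ℝ (Fin n ⊕ Fin n) :=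
  WithLp.toLp 2 (fun i => Sum.elim (fun a => v (Sum.inr a)) (fun a => -(v (Sum.inl a))) i)

section aux
variable {F : Type*} [NormedAddCommGroup F] [InnerProductSpace ℝ F] [CompleteSpace F]

lemma aux_dirDeriv (H : F → ℝ) (hH : ∀ w, HasGradientAt H (gradient H w) w)
    (x v : F) (t : ℝ) :
    HasDerivAt (fun s : ℝ => H (x + s • v)) (inner ℝ (gradient H (x + t • v)) v : ℝ) t := by
  have hline : HasDerivAt (fun s : ℝ => x + s • v) v t := by
    simpa using ((hasDerivAt_id t).smul_const v).const_add x
  have h2 := (hH (x + t • v)).hasFDerivAt.comp_hasDerivAt t hline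
  exact h2

lemma aux_convex_lower (H : F → ℝ) (hconv : ConvexOn ℝ Set.univ H)
    (hH : ∀ w, HasGradientAt H (gradient H w) w) (x y : F) :
    H x + (inner ℝ (gradient H x) (y - x) : ℝ) ≤ H y := by
  set v := y - x with hv
  have hφ : ConvexOn ℝ Set.univ (fun t : ℝ => H (x + t • v)) := by
    have := hconv.comp_affineMap (AffineMap.lineMap x y : ℝ →ᵃ[ℝ] F)
    have heq : (H ∘ (AffineMap.lineMap x y : ℝ →ᵃ[ℝ] F)) = fun t : ℝ => H (x + t • v) := by
      funext t
      simp [AffineMap.lineMap_apply, hv, add_comm]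
    rw [heq] at this
    simpa using this
  have hd : HasDerivAt (fun t : ℝ => H (x + t • v)) (inner ℝ (gradient H x) v : ℝ) 0 := by
    simpa using aux_dirDeriv H hH x v 0
  have hs := hφ.le_slope_of_hasDerivAt (Set.mem_univ (0:ℝ)) (Set.mem_univ (1:ℝ)) one_pos hd
  rw [slope_def_field] at hs
  simp only [zero_smul, add_zero, one_smul] at hs
  have : (inner ℝ (gradient H x) v : ℝ) ≤ H (x + v) - H x := by
    simpa [div_one] using hs
  have hxy : x + (y - x) = y := by abel
  rw [hv, hxy] at this
  rw [hv]
  linarith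

lemma aux_descent (H : F → ℝ) (hH : ∀ w, HasGradientAt H (gradient H w) w)
    (L : ℝ) (hL : 0 < L)
    (hLip : LipschitzWith (Real.toNNReal L) (fun w => gradient H w)) (x y : F) :
    H y ≤ H x + (inner ℝ (gradient H x) (y - x) : ℝ) + L / 2 * ‖y - x‖ ^ 2 := by
  set v := y - x with hv
  set φ' : ℝ → ℝ := fun t => (inner ℝ (gradient H (x + t • v)) v : ℝ) with hphi
  have hderiv : ∀ t : ℝ, HasDerivAt (fun s : ℝ => H (x + s • v)) (φ' t) t :=
    aux_dirDeriv H hH x v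
  have hcontg : Continuous fun w => gradient H w := hLip.continuous
  have hcont : Continuous φ' := by
    apply Continuous.inner
    · exact hcontg.comp (by continuity)
    · exact continuous_const
  have hint : IntervalIntegrable φ' MeasureTheory.volume 0 1 := hcont.intervalIntegrable 0 1
  have hftc : ∫ t in (0:ℝ)..1, φ' t = H (x + (1:ℝ) • v) - H (x + (0:ℝ) • v) :=
    intervalIntegral.integral_eq_sub_of_hasDerivAt (fun t _ => hderiv t) hint
  have hLipR : ∀ t : ℝ, 0 ≤ t → φ' t ≤ φ' 0 + L * ‖v‖ ^ 2 * t := by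
    intro t ht
    have h1 : φ' t - φ' 0 = (inner ℝ (gradient H (x + t • v) - gradient H (x + (0:ℝ) • v)) v : ℝ) := by
      simp [hphi, inner_sub_left]
    have h2 : ‖gradient H (x + t • v) - gradient H (x + (0:ℝ) • v)‖ ≤ L * (t * ‖v‖) := by
      have hd := hLip.dist_le_mul (x + t • v) (x + (0:ℝ) • v)
      rw [dist_eq_norm, dist_eq_norm] at hd
      have he : (x + t • v) - (x + (0:ℝ) • v) = t • v := by
        simp
      rw [he] at hd
      have : ‖t • v‖ = t * ‖v‖ := by
        rw [norm_smul, Real.norm_eq_abs, abs_of_nonneg ht]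
      rw [this] at hd
      calc ‖gradient H (x + t • v) - gradient H (x + (0:ℝ) • v)‖
          ≤ (Real.toNNReal L : ℝ) * (t * ‖v‖) := hd
        _ = L * (t * ‖v‖) := by rw [Real.coe_toNNReal L hL.le]
    have h3 : (inner ℝ (gradient H (x + t • v) - gradient H (x + (0:ℝ) • v)) v : ℝ) ≤ L * (t * ‖v‖) * ‖v‖ :=
      (real_inner_le_norm _ _).trans (mul_le_mul_of_nonneg_right h2 (norm_nonneg v))
    have h4 : L * (t * ‖v‖) * ‖v‖ = L * ‖v‖ ^ 2 * t := by ring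
    linarith [h1 ▸ h3, h4 ▸ h3]
  have hmono : ∫ t in (0:ℝ)..1, φ' t ≤ ∫ t in (0:ℝ)..1, (φ' 0 + L * ‖v‖ ^ 2 * t) := by
    apply intervalIntegral.integral_mono_on zero_le_one hint
    · exact Continuous.intervalIntegrable (by continuity) 0 1
    · intro t ht
      exact hLipR t ht.1
  have hIval : ∫ t in (0:ℝ)..1, (φ' 0 + L * ‖v‖ ^ 2 * t) = φ' 0 + L * ‖v‖ ^ 2 / 2 := by
    rw [intervalIntegral.integral_add intervalIntegrable_const
      (Continuous.intervalIntegrable (by continuity) 0 1)]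
    rw [intervalIntegral.integral_const_mul, integral_id]
    simp
    ring
  have hends : H (x + (1:ℝ) • v) = H y ∧ H (x + (0:ℝ) • v) = H x := by
    constructor
    · rw [one_smul, hv]
      congr 1
      abel
    · simp
  have hphi0 : φ' 0 = (inner ℝ (gradient H x) v : ℝ) := by
    simp [hphi]
  rw [hends.1, hends.2] at hftc
  rw [hIval, hphi0] at hmono
  rw [hv] at hmono
  linarith

lemma aux_grad_zero (H : F → ℝ) (hH : ∀ w, HasGradientAt H (gradient H w) w)
    (zstar : F) (hmin : H zstar = 0) (hnonneg : ∀ w, 0 ≤ H w) :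
    gradient H zstar = 0 := by
  have hloc : IsLocalMin H zstar := Filter.Eventually.of_forall fun w => by
    rw [hmin]; exact hnonneg w
  have h0 := hloc.hasFDerivAt_eq_zero (hH zstar).hasFDerivAt
  have := congrArg (InnerProductSpace.toDual ℝ F).symm h0
  simpa [gradient] using this
end aux

lemma Jmap_inner_self (n : ℕ) (v : EuclideanSpace ℝ (Fin n ⊕ Fin n)) :
    (inner ℝ v (Jmap n v) : ℝ) = 0 := by
  simp only [PiLp.inner_apply, RCLike.inner_apply, Fintype.sum_sum_type, Jmap, PiLp.toLp_apply, Sum.elim_inl,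
    Sum.elim_inr, conj_trivial]
  have : ∀ a : Fin n, -v (Sum.inl a) * v (Sum.inr a) = -(v (Sum.inr a) * v (Sum.inl a)) := by
    intro a; ring
  rw [Finset.sum_congr rfl fun a _ => this a]
  simp

lemma Jmap_norm_sq (n : ℕ) (v : EuclideanSpace ℝ (Fin n ⊕ Fin n)) :
    ‖Jmap n v‖ ^ 2 = ‖v‖ ^ 2 := by
  rw [← real_inner_self_eq_norm_sq, ← real_inner_self_eq_norm_sq]
  simp only [PiLp.inner_apply, RCLike.inner_apply, Fintype.sum_sum_type, Jmap, PiLp.toLp_apply, Sum.elim_inl,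
    Sum.elim_inr, conj_trivial]
  have h : ∀ a : Fin n, -v (Sum.inl a) * -v (Sum.inl a) = v (Sum.inl a) * v (Sum.inl a) :=
    fun a => by ring
  rw [Finset.sum_congr rfl fun a _ => h a, add_comm]



/-- For the explicit discretization `z^{k+1} = z^k + ε(J∇H(z^k) + z⋆ − z^k)`
with `ε = 1/(L² + 1)`, the averaged iterate `z̄^T = (1/T)∑_{k<T} z^k` satisfies
`H(z̄^T) ≤ (1/(εT))·(H(z^0) + (1/(2L))‖z^0 − z⋆‖²)`, i.e. `H(z̄^T) = O(1/T)`. -/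
theorem stmt8 (n : ℕ)
    (H : EuclideanSpace ℝ (Fin n ⊕ Fin n) → ℝ)
    (hconv : ConvexOn ℝ Set.univ H)
    (hH : ∀ w, HasGradientAt H (gradient H w) w)
    (L : ℝ) (hL : 0 < L)
    (hLip : LipschitzWith (Real.toNNReal L) (fun w => gradient H w))
    (zstar : EuclideanSpace ℝ (Fin n ⊕ Fin n))
    (hmin : H zstar = 0) (hnonneg : ∀ w, 0 ≤ H w)
    (ε : ℝ) (hε : ε = 1 / (L ^ 2 + 1))
    (z : ℕ → EuclideanSpace ℝ (Fin n ⊕ Fin n))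
    (hrec : ∀ k, z (k + 1) =
      z k + ε • (Jmap n (gradient H (z k)) + zstar - z k)) :
    ∀ T : ℕ, 0 < T →
      H ((T : ℝ)⁻¹ • ∑ k ∈ range T, z k) ≤
        (1 / (ε * T)) * (H (z 0) + (1 / (2 * L)) * ‖z 0 - zstar‖ ^ 2) := by
  intro T hT
  have hL0 : L ≠ 0 := ne_of_gt hL
  have hεpos : 0 < ε := by rw [hε]; positivity
  have hgs : gradient H zstar = 0 := aux_grad_zero H hH zstar hmin hnonneg
  -- interpolation inequality
  have hinterp : ∀ x, (inner ℝ (gradient H x) (zstar - x) : ℝ) ≤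
      -H x - ‖gradient H x‖ ^ 2 / (2 * L) := by
    intro x
    set g := gradient H x with hg
    set y := zstar + L⁻¹ • g with hy
    have hA := aux_convex_lower H hconv hH x y
    have hB := aux_descent H hH L hL hLip zstar y
    rw [hgs, hmin] at hB
    simp only [inner_zero_left, add_zero, zero_add] at hB
    have hyz : y - zstar = L⁻¹ • g := by rw [hy]; abel
    have hBn : L / 2 * ‖y - zstar‖ ^ 2 = ‖g‖ ^ 2 / (2 * L) := by
      rw [hyz, norm_smul, Real.norm_eq_abs, mul_pow, sq_abs]
      field_simp
    have hAi : (inner ℝ g (y - x) : ℝ) = (inner ℝ g (zstar - x) : ℝ) + L⁻¹ * ‖g‖ ^ 2 := by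
      have : y - x = (zstar - x) + L⁻¹ • g := by rw [hy]; abel
      rw [this, inner_add_right, real_inner_smul_right, real_inner_self_eq_norm_sq]
    rw [hAi] at hA
    rw [hBn] at hB
    have hfrac : L⁻¹ * ‖g‖ ^ 2 - ‖g‖ ^ 2 / (2 * L) = ‖g‖ ^ 2 / (2 * L) := by
      field_simp
      ring
    linarith
  -- per-step Lyapunov decrease
  have hstep : ∀ k, ε * H (z k) + (H (z (k + 1)) + 1 / (2 * L) * ‖z (k + 1) - zstar‖ ^ 2) ≤
      H (z k) + 1 / (2 * L) * ‖z k - zstar‖ ^ 2 := by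
    intro k
    set g := gradient H (z k) with hg
    set d := Jmap n g + zstar - z k with hd
    have hz1 : z (k + 1) = z k + ε • d := hrec k
    have hsm : ‖ε • d‖ ^ 2 = ε ^ 2 * ‖d‖ ^ 2 := by
      rw [norm_smul, Real.norm_eq_abs, mul_pow, sq_abs]
    have hdesc : H (z (k + 1)) ≤ H (z k) + ε * (inner ℝ g d : ℝ) + L / 2 * (ε ^ 2 * ‖d‖ ^ 2) := by
      have h0 := aux_descent H hH L hL hLip (z k) (z (k + 1))
      have he : z (k + 1) - z k = ε • d := by rw [hz1]; abel
      rw [he, real_inner_smul_right, hsm] at h0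
      linarith
    have hIgd : (inner ℝ g d : ℝ) = (inner ℝ g (zstar - z k) : ℝ) := by
      have h1 : d = Jmap n g + (zstar - z k) := by rw [hd]; abel
      rw [h1, inner_add_right, Jmap_inner_self, zero_add]
    have hnorm1 : ‖z (k + 1) - zstar‖ ^ 2 = ‖z k - zstar‖ ^ 2 +
        2 * ε * (inner ℝ (z k - zstar) d : ℝ) + ε ^ 2 * ‖d‖ ^ 2 := by
      have he : z (k + 1) - zstar = (z k - zstar) + ε • d := by rw [hz1]; abel
      rw [he, norm_add_sq_real, real_inner_smul_right, hsm]
      ring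
    have hIbd : (inner ℝ (z k - zstar) d : ℝ) =
        (inner ℝ (z k - zstar) (Jmap n g) : ℝ) - ‖z k - zstar‖ ^ 2 := by
      have h1 : d = Jmap n g - (z k - zstar) := by rw [hd]; abel
      rw [h1, inner_sub_right, real_inner_self_eq_norm_sq]
    have hDd : ‖d‖ ^ 2 = ‖g‖ ^ 2 - 2 * (inner ℝ (z k - zstar) (Jmap n g) : ℝ) +
        ‖z k - zstar‖ ^ 2 := by
      have h1 : d = Jmap n g - (z k - zstar) := by rw [hd]; abel
      rw [h1, norm_sub_sq_real, Jmap_norm_sq, real_inner_comm]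
    set A := ‖g‖ ^ 2 with hA
    set B := ‖z k - zstar‖ ^ 2 with hB
    set S := (inner ℝ (z k - zstar) (Jmap n g) : ℝ) with hS
    have hIP := hinterp (z k)
    rw [← hg, ← hA] at hIP
    have hIP' : ε * (inner ℝ g (zstar - z k) : ℝ) ≤ ε * (-H (z k) - A / (2 * L)) :=
      mul_le_mul_of_nonneg_left hIP hεpos.le
    have hBnn : (0:ℝ) ≤ B := by rw [hB]; positivity
    have key : L / 2 * (ε ^ 2 * (A - 2 * S + B)) +
        1 / (2 * L) * (B + 2 * ε * (S - B) + ε ^ 2 * (A - 2 * S + B)) =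
        1 / (2 * L) * B + ε * (A / (2 * L)) - ε / (2 * L) * B := by
      rw [hε]
      have h1 : L ^ 2 + 1 ≠ 0 := by positivity
      field_simp
      ring
    have hεB : 0 ≤ ε / (2 * L) * B := by positivity
    rw [hnorm1, hIbd, hDd]
    rw [hDd, hIgd] at hdesc
    linarith
  -- telescoping
  set E : ℕ → ℝ := fun k => H (z k) + 1 / (2 * L) * ‖z k - zstar‖ ^ 2 with hE
  have hEnn : ∀ k, 0 ≤ E k := fun k =>
    add_nonneg (hnonneg _) (by positivity)
  have htel : ∑ k ∈ range T, ε * H (z k) ≤ E 0 := by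
    calc ∑ k ∈ range T, ε * H (z k) ≤ ∑ k ∈ range T, (E k - E (k + 1)) := by
          apply Finset.sum_le_sum
          intro k _
          have := hstep k
          simp only [hE]
          linarith
      _ = E 0 - E T := Finset.sum_range_sub' E T
      _ ≤ E 0 := by linarith [hEnn T]
  -- Jensen
  have hT0 : (T : ℝ) ≠ 0 := Nat.cast_ne_zero.mpr hT.ne'
  have hTpos : (0:ℝ) < T := by positivity
  have hw : ∑ _k ∈ range T, (T : ℝ)⁻¹ = 1 := by
    rw [Finset.sum_const, card_range, nsmul_eq_mul]
    field_simp
  have hJ : H ((T : ℝ)⁻¹ • ∑ k ∈ range T, z k) ≤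
      ∑ k ∈ range T, (T : ℝ)⁻¹ * H (z k) := by
    have h0 := hconv.map_sum_le (t := range T) (w := fun _ => (T : ℝ)⁻¹) (p := z)
      (fun _ _ => by positivity) hw (fun _ _ => Set.mem_univ _)
    rw [← Finset.smul_sum] at h0
    simpa [smul_eq_mul] using h0
  have hsum : ∑ k ∈ range T, H (z k) ≤ E 0 / ε := by
    rw [← Finset.mul_sum] at htel
    rw [le_div_iff₀ hεpos]
    linarith
  calc H ((T : ℝ)⁻¹ • ∑ k ∈ range T, z k) ≤ ∑ k ∈ range T, (T : ℝ)⁻¹ * H (z k) := hJ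
    _ = (T : ℝ)⁻¹ * ∑ k ∈ range T, H (z k) := by rw [Finset.mul_sum]
    _ ≤ (T : ℝ)⁻¹ * (E 0 / ε) := by
        apply mul_le_mul_of_nonneg_left hsum
        positivity
    _ = (1 / (ε * T)) * (H (z 0) + 1 / (2 * L) * ‖z 0 - zstar‖ ^ 2) := by
        have hgen : ∀ X : ℝ, (T : ℝ)⁻¹ * (X / ε) = 1 / (ε * T) * X := by
          intro X
          rw [div_eq_mul_inv, div_eq_mul_inv, mul_inv]
          ring
        exact hgen (E 0)
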